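/- Matrix stability lemma: let n ≥ 1 and let A₁, A₂ be real symmetric n×n matrices such that A₁ is positive definite and every eigenvalue of the product A₁A₂ (as a complex matrix) has positive real part (i.e. A₁A₂ is positively stable). Then A₂ is positive definite. -/

import Mathlib

open Matrix

/-- Congruence by an invertible matrix preserves positive definiteness. -/
lemma aux_posDef_conj {m : Type*} [Fintype m] [DecidableEq m]
    {S M : Matrix m m ℝ} (hS : S.PosDef) (hM : IsUnit M) :
    (Mᴴ * S * M).PosDef := by
  refine Matrix.PosDef.of_dotProduct_mulVec_pos ?_ fun x hx => ?_
  · show (Mᴴ * S * M)ᴴ = _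
    rw [conjTranspose_mul, conjTranspose_mul, conjTranspose_conjTranspose, hS.1, mul_assoc]
  · have hMx : M *ᵥ x ≠ 0 :=
      (Matrix.mulVec_injective_iff_isUnit.mpr hM).ne_iff' (by simp) |>.2 hx
    have key : star x ⬝ᵥ (Mᴴ * S * M) *ᵥ x = star (M *ᵥ x) ⬝ᵥ S *ᵥ (M *ᵥ x) := by
      rw [star_mulVec, ← Matrix.mulVec_mulVec, ← Matrix.mulVec_mulVec, dotProduct_mulVec]
    rw [key]
    exact hS.dotProduct_mulVec_pos hMx

/-- A real hermitian matrix with positive eigenvalues is positive definite. -/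
lemma aux_posDef_of_eigenvalues_pos {m : Type*} [Fintype m] [DecidableEq m]
    {S : Matrix m m ℝ} (hS : S.IsHermitian) (h : ∀ i, 0 < hS.eigenvalues i) :
    S.PosDef := by
  have hU : IsUnit (star (hS.eigenvectorUnitary : Matrix m m ℝ)) :=
    ⟨⟨star (hS.eigenvectorUnitary : Matrix m m ℝ), (hS.eigenvectorUnitary : Matrix m m ℝ),
      Unitary.star_mul_self_of_mem hS.eigenvectorUnitary.2,
      Unitary.mul_star_self_of_mem hS.eigenvectorUnitary.2⟩, rfl⟩
  have hD : (Matrix.diagonal (RCLike.ofReal ∘ hS.eigenvalues) : Matrix m m ℝ).PosDef :=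
    Matrix.PosDef.diagonal fun i => by simpa using h i
  have key := aux_posDef_conj hD hU
  have hform : (star (hS.eigenvectorUnitary : Matrix m m ℝ))ᴴ
      * Matrix.diagonal (RCLike.ofReal ∘ hS.eigenvalues)
      * star (hS.eigenvectorUnitary : Matrix m m ℝ) = S := by
    rw [star_eq_conjTranspose, conjTranspose_conjTranspose, ← star_eq_conjTranspose]
    exact hS.spectral_theorem.symm
  rwa [hform] at key

/-- **Matrix stability lemma:** if `A₁`, `A₂` are real symmetric matrices,
`A₁` is positive definite, and every complex eigenvalue of the product `A₁A₂`
has positive real part (i.e. `A₁A₂` is positively stable), then `A₂` is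
positive definite. -/
theorem posDef_of_symm_posDef_mul_positively_stable
    (n : ℕ) (hn : 1 ≤ n)
    (A₁ A₂ : Matrix (Fin n) (Fin n) ℝ)
    (h₁symm : A₁.IsSymm) (h₂symm : A₂.IsSymm)
    (h₁pd : A₁.PosDef)
    (hstable : ∀ μ : ℂ, μ ∈ spectrum ℂ ((A₁ * A₂).map (Complex.ofReal ·)) →
      0 < μ.re) :
    A₂.PosDef := by
  classical
  have hA₁ps := h₁pd.posSemidef
  open scoped MatrixOrder in set B := CFC.sqrt A₁ with hBdef
  open scoped MatrixOrder in have hBps : B.PosSemidef := (CFC.sqrt_nonneg A₁).posSemidef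
  open scoped MatrixOrder in have hBB : B * B = A₁ := CFC.sqrt_mul_sqrt_self A₁ hA₁ps.nonneg
  have hdetB : IsUnit B.det := by
    have hsq : B.det * B.det = A₁.det := by rw [← det_mul, hBB]
    have hpos : (0:ℝ) < A₁.det := h₁pd.det_pos
    refine isUnit_iff_ne_zero.2 fun h0 => ?_
    rw [h0, zero_mul] at hsq
    exact hpos.ne' hsq.symm
  have hBunit : IsUnit B := (Matrix.isUnit_iff_isUnit_det _).2 hdetB
  set S := B * A₂ * B with hSdef
  have hA₂herm : A₂.IsHermitian := by
    rwa [Matrix.IsHermitian, conjTranspose_eq_transpose_of_trivial]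
  have hBh : Bᴴ = B := hBps.1
  have hSherm : S.IsHermitian := by
    show Sᴴ = S
    rw [hSdef, conjTranspose_mul, conjTranspose_mul, hBh, hA₂herm, mul_assoc]
  have hmapmul : ∀ X Y : Matrix (Fin n) (Fin n) ℝ,
      ((X * Y).map (Complex.ofReal ·))
        = X.map (Complex.ofReal ·) * Y.map (Complex.ofReal ·) := by
    intro X Y
    ext i j
    simp [Matrix.mul_apply, Matrix.map_apply]
  have hBmapUnit : IsUnit (B.map (Complex.ofReal ·)) := by
    rw [Matrix.isUnit_iff_isUnit_det]
    have : (B.map (Complex.ofReal ·)).det = Complex.ofRealHom B.det :=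
      (RingHom.map_det Complex.ofRealHom B).symm
    rw [this]
    exact hdetB.map Complex.ofRealHom
  obtain ⟨u, hu⟩ := hBmapUnit
  have hstep : (u : Matrix (Fin n) (Fin n) ℂ) * S.map (Complex.ofReal ·)
      = (A₁ * A₂).map (Complex.ofReal ·) * (u : Matrix (Fin n) (Fin n) ℂ) := by
    rw [hu, ← hmapmul, ← hmapmul]
    congr 1
    rw [hSdef, ← hBB]
    simp only [← mul_assoc]
  have hconj : (A₁ * A₂).map (Complex.ofReal ·)
      = (u : Matrix (Fin n) (Fin n) ℂ) * S.map (Complex.ofReal ·)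
        * ((u⁻¹ : (Matrix (Fin n) (Fin n) ℂ)ˣ) : Matrix (Fin n) (Fin n) ℂ) := by
    rw [hstep, mul_assoc, Units.mul_inv, mul_one]
  have heig : ∀ i, 0 < hSherm.eigenvalues i := by
    intro i
    set l := hSherm.eigenvalues i with hl
    have hmem : l ∈ spectrum ℝ S := hSherm.eigenvalues_mem_spectrum_real i
    have hdet : (l • (1 : Matrix (Fin n) (Fin n) ℝ) - S).det = 0 := by
      by_contra h
      apply spectrum.mem_iff.mp hmem
      rw [Algebra.algebraMap_eq_smul_one]
      exact (Matrix.isUnit_iff_isUnit_det _).2 (isUnit_iff_ne_zero.2 h)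
    have hmapdet : ((l : ℂ) • (1 : Matrix (Fin n) (Fin n) ℂ)
        - S.map (Complex.ofReal ·)).det = 0 := by
      have hmap : ((l • (1 : Matrix (Fin n) (Fin n) ℝ) - S).map (Complex.ofReal ·))
          = (l : ℂ) • (1 : Matrix (Fin n) (Fin n) ℂ) - S.map (Complex.ofReal ·) := by
        ext i j
        simp [Matrix.map_apply, Matrix.one_apply, apply_ite]
      rw [← hmap]
      have : ((l • (1 : Matrix (Fin n) (Fin n) ℝ) - S).map (Complex.ofReal ·)).det
          = Complex.ofRealHom (l • (1 : Matrix (Fin n) (Fin n) ℝ) - S).det :=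
        (RingHom.map_det Complex.ofRealHom _).symm
      rw [this, hdet, map_zero]
    have hmemC : (l : ℂ) ∈ spectrum ℂ (S.map (Complex.ofReal ·)) := by
      rw [spectrum.mem_iff, Algebra.algebraMap_eq_smul_one,
        Matrix.isUnit_iff_isUnit_det, hmapdet]
      exact not_isUnit_zero
    have hmemC' : (l : ℂ) ∈ spectrum ℂ ((A₁ * A₂).map (Complex.ofReal ·)) := by
      rw [hconj, spectrum.units_conjugate]
      exact hmemC
    have := hstable _ hmemC'
    simpa using this
  have hSpd : S.PosDef := aux_posDef_of_eigenvalues_pos hSherm heig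
  have hA₂eq : A₂ = (B⁻¹)ᴴ * S * B⁻¹ := by
    have h1 : B⁻¹ * B = 1 := Matrix.nonsing_inv_mul _ hdetB
    have h2 : B * B⁻¹ = 1 := Matrix.mul_nonsing_inv _ hdetB
    rw [Matrix.conjTranspose_nonsing_inv, hBh, hSdef]
    calc A₂ = (B⁻¹ * B) * A₂ * (B * B⁻¹) := by rw [h1, h2, one_mul, mul_one]
    _ = B⁻¹ * (B * A₂ * B) * B⁻¹ := by simp only [← mul_assoc]
  rw [hA₂eq]
  exact aux_posDef_conj hSpd ((Matrix.isUnit_nonsing_inv_iff).2 hBunit)
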